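/- arXiv:2511.00597 — 2 statements merged into one kernel-verified Lean document; each statement's English description precedes it below -/
import Mathlib

section
/- Let X be a sub-Weibull random variable of order α > 0 with finite mean. Then ‖X − E[X]‖_{ψ_α} ≤ C_α^{(3)} ‖X‖_{ψ_α}, where C_α^{(3)} = C_α^{(2)} (1 + C_α^{(1)} (log 2)^{−1/α}), with C_α^{(2)} = 2^{1/α} if α < 1 and C_α^{(2)} = 1 if α ≥ 1, and C_α^{(1)} = 2√(2π) e^{α/12} e^{1/(2e)} α^{−(α+2)/(2α)}. -/
open MeasureTheory Real

lemma exp_avg_le {θ A B : ℝ} (h0 : 0 ≤ θ) (h1 : θ ≤ 1) :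
    Real.exp (θ * A + (1 - θ) * B) ≤ θ * Real.exp A + (1 - θ) * Real.exp B := by
  have := convexOn_exp.2 (Set.mem_univ A) (Set.mem_univ B) h0 (sub_nonneg.2 h1) (by ring)
  simpa [smul_eq_mul] using this

lemma rpow_avg_le {p θ u v : ℝ} (hp : 1 ≤ p) (h0 : 0 ≤ θ) (h1 : θ ≤ 1)
    (hu : 0 ≤ u) (hv : 0 ≤ v) :
    (θ * u + (1 - θ) * v) ^ p ≤ θ * u ^ p + (1 - θ) * v ^ p := by
  have := (convexOn_rpow hp).2 (Set.mem_Ici.2 hu) (Set.mem_Ici.2 hv) h0 (sub_nonneg.2 h1)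
    (by ring)
  simpa [smul_eq_mul] using this

lemma rpow_subadd {p u v : ℝ} (hp0 : 0 ≤ p) (hp : p ≤ 1) (hu : 0 ≤ u) (hv : 0 ≤ v) :
    (u + v) ^ p ≤ u ^ p + v ^ p := by
  exact Real.rpow_add_le_add_rpow hu hv hp0 hp

lemma le_beta_exp {α : ℝ} (hα : 0 < α) {u : ℝ} (hu : 0 ≤ u) :
    u ≤ (α * Real.exp 1)⁻¹ ^ ((1:ℝ)/α) * Real.exp (u ^ α) := by
  have he : (0:ℝ) < Real.exp 1 := Real.exp_pos 1
  have hae : (0:ℝ) < (α * Real.exp 1)⁻¹ := by positivity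
  have hR : (0:ℝ) ≤ (α * Real.exp 1)⁻¹ ^ ((1:ℝ)/α) * Real.exp (u ^ α) := by positivity
  have key : u ^ α ≤ ((α * Real.exp 1)⁻¹ ^ ((1:ℝ)/α) * Real.exp (u ^ α)) ^ α := by
    rw [Real.mul_rpow (by positivity) (Real.exp_pos _).le,
      ← Real.rpow_mul hae.le, one_div, inv_mul_cancel₀ hα.ne', Real.rpow_one,
      ← Real.exp_one_rpow (u ^ α), ← Real.rpow_mul he.le, Real.exp_one_rpow]
    set v : ℝ := u ^ α * α with hv
    have h1 : v ≤ Real.exp (v - 1) := by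
      have := Real.add_one_le_exp (v - 1); linarith
    rw [Real.exp_sub] at h1
    have huα : u ^ α = v / α := by field_simp [hv]; exact hv.symm
    rw [huα, div_le_iff₀ hα]
    have heq : (α * Real.exp 1)⁻¹ * Real.exp v * α = Real.exp v / Real.exp 1 := by
      field_simp
    rw [heq]; exact h1
  calc u = (u ^ α) ^ (1/α) := by
        rw [← Real.rpow_mul hu, mul_one_div, div_self hα.ne', Real.rpow_one]
    _ ≤ (((α * Real.exp 1)⁻¹ ^ ((1:ℝ)/α) * Real.exp (u ^ α)) ^ α) ^ (1/α) :=
        Real.rpow_le_rpow (Real.rpow_nonneg hu α) key (by positivity)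
    _ = _ := by rw [← Real.rpow_mul hR, mul_one_div, div_self hα.ne', Real.rpow_one]

lemma two_beta_le_C1 {α : ℝ} (hα : 0 < α) :
    2 * (α * Real.exp 1)⁻¹ ^ ((1:ℝ)/α) ≤
      2 * Real.sqrt (2 * Real.pi) * Real.exp (α / 12) *
        Real.exp (1 / (2 * Real.exp 1)) * α ^ (-(α + 2) / (2 * α)) := by
  have he : (0:ℝ) < Real.exp 1 := Real.exp_pos 1
  have hpi : (0:ℝ) < Real.pi := Real.pi_pos
  have hsplit : (α * Real.exp 1)⁻¹ ^ ((1:ℝ)/α)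
      = α ^ (-(1/α)) * Real.exp (-(1/α)) := by
    rw [mul_inv, Real.mul_rpow (by positivity) (by positivity),
      ← Real.rpow_neg_one α, ← Real.rpow_mul hα.le,
      ← Real.rpow_neg_one (Real.exp 1), ← Real.rpow_mul he.le, Real.exp_one_rpow]
    norm_num
  have hexp : α ^ (-(α + 2) / (2 * α)) = α ^ (-(1/α)) * α ^ (-(1:ℝ)/2) := by
    rw [show -(α + 2) / (2 * α) = -(1/α) + (-(1:ℝ)/2) by
        rw [div_eq_iff (by positivity : (0:ℝ) < 2*α).ne']
        have h := hα.ne'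
        field_simp
        ring,
      Real.rpow_add hα]
  rw [hsplit, hexp]
  have hA : (0:ℝ) < α ^ (-(1/α)) := Real.rpow_pos_of_pos hα _
  rw [show 2 * Real.sqrt (2*Real.pi) * Real.exp (α/12) * Real.exp (1/(2*Real.exp 1)) *
        (α ^ (-(1/α)) * α ^ (-(1:ℝ)/2))
      = (2 * α ^ (-(1/α))) * (Real.sqrt (2*Real.pi) * Real.exp (α/12) *
          Real.exp (1/(2*Real.exp 1)) * α ^ (-(1:ℝ)/2)) by ring,
    show 2 * (α ^ (-(1/α)) * Real.exp (-(1/α))) = (2 * α ^ (-(1/α))) * Real.exp (-(1/α)) by ring]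
  refine mul_le_mul_of_nonneg_left ?_ (by positivity)
  have hαr : α ^ (-(1:ℝ)/2) = (Real.sqrt α)⁻¹ := by
    rw [show (-(1:ℝ)/2) = -(1/2) by norm_num, Real.rpow_neg hα.le, ← Real.sqrt_eq_rpow]
  rw [hαr]
  have hsq : (0:ℝ) < Real.sqrt α := Real.sqrt_pos.2 hα
  have h1 : Real.sqrt α ≤ Real.sqrt (2*Real.pi) * Real.exp (α/12) := by
    have hcore : α ≤ 2*Real.pi * Real.exp (α/6) := by
      have h6 : (6:ℝ) ≤ 2*Real.pi := by nlinarith [Real.pi_gt_three]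
      have hee : α/6 + 1 ≤ Real.exp (α/6) := Real.add_one_le_exp _
      nlinarith
    calc Real.sqrt α ≤ Real.sqrt (2*Real.pi * Real.exp (α/6)) := Real.sqrt_le_sqrt hcore
      _ = Real.sqrt (2*Real.pi) * Real.sqrt (Real.exp (α/6)) :=
          Real.sqrt_mul (by positivity) _
      _ = Real.sqrt (2*Real.pi) * Real.exp (α/12) := by
          rw [show α/12 = α/6/2 by ring, Real.exp_half]
  have key : Real.exp (-(1/α)) * Real.sqrt α
      ≤ Real.sqrt (2*Real.pi) * Real.exp (α/12) * Real.exp (1/(2*Real.exp 1)) := by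
    have h2 : Real.exp (-(1/α)) ≤ 1 := Real.exp_le_one_iff.2 (neg_nonpos.2 (by positivity))
    have h3 : (1:ℝ) ≤ Real.exp (1/(2*Real.exp 1)) := Real.one_le_exp (by positivity)
    nlinarith [Real.sqrt_nonneg α, Real.exp_pos (-(1/α)),
      mul_pos (Real.sqrt_pos.2 (by positivity : (0:ℝ) < 2*Real.pi)) (Real.exp_pos (α/12))]
  calc Real.exp (-(1/α))
      = Real.exp (-(1/α)) * Real.sqrt α * (Real.sqrt α)⁻¹ := by field_simp
    _ ≤ Real.sqrt (2*Real.pi) * Real.exp (α/12) * Real.exp (1/(2*Real.exp 1)) * (Real.sqrt α)⁻¹ :=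
        mul_le_mul_of_nonneg_right key (by positivity)

/-- The sub-Weibull(α) quasi-norm. -/
noncomputable def psiNorm {Ω : Type*} [MeasurableSpace Ω] (μ : Measure Ω) (α : ℝ)
    (X : Ω → ℝ) : ℝ :=
  sInf {c : ℝ | 0 < c ∧ ∫ ω, Real.exp (|X ω| ^ α / c ^ α) ∂μ ≤ 2}

set_option maxHeartbeats 2000000 in
/-- centering of sub-Weibull random variables. -/
theorem subWeibull_centering {Ω : Type*} [MeasurableSpace Ω] (μ : Measure Ω)
    [IsProbabilityMeasure μ] (α : ℝ) (hα : 0 < α) (X : Ω → ℝ)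
    (hint : Integrable X μ)
    (hX : {c : ℝ | 0 < c ∧ ∫ ω, Real.exp (|X ω| ^ α / c ^ α) ∂μ ≤ 2}.Nonempty) :
    psiNorm μ α (fun ω => X ω - ∫ ω', X ω' ∂μ) ≤
      ((if α < 1 then (2 : ℝ) ^ (1 / α) else 1) *
        (1 + (2 * Real.sqrt (2 * Real.pi) * Real.exp (α / 12) *
                Real.exp (1 / (2 * Real.exp 1)) * α ^ (-(α + 2) / (2 * α))) *
              Real.log 2 ^ (-(1 : ℝ) / α))) * psiNorm μ α X := by
  classical
  set m : ℝ := ∫ ω', X ω' ∂μ with hm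
  set C1 : ℝ := 2 * Real.sqrt (2 * Real.pi) * Real.exp (α / 12) *
      Real.exp (1 / (2 * Real.exp 1)) * α ^ (-(α + 2) / (2 * α)) with hC1
  set L : ℝ := Real.log 2 ^ (-(1:ℝ)/α) with hL
  set C2 : ℝ := if α < 1 then (2 : ℝ) ^ (1 / α) else 1 with hC2
  set K : ℝ := C2 * (1 + C1 * L) with hK
  have hlog2 : (0:ℝ) < Real.log 2 := Real.log_pos one_lt_two
  have hC1pos : 0 < C1 := by
    rw [hC1]
    have := Real.rpow_pos_of_pos hα (-(α + 2) / (2 * α))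
    positivity
  have hLpos : 0 < L := Real.rpow_pos_of_pos hlog2 _
  have hC2pos : 0 < C2 := by
    rw [hC2]; split
    · exact Real.rpow_pos_of_pos two_pos _
    · exact one_pos
  have hKpos : 0 < K := by
    rw [hK]; positivity
  simp only [psiNorm]
  set S : Set ℝ := {c : ℝ | 0 < c ∧ ∫ ω, Real.exp (|X ω| ^ α / c ^ α) ∂μ ≤ 2} with hS
  set T : Set ℝ := {c : ℝ | 0 < c ∧ ∫ ω, Real.exp (|X ω - m| ^ α / c ^ α) ∂μ ≤ 2} with hT
  have hTbdd : BddBelow T := ⟨0, fun x hx => hx.1.le⟩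
  have hYm : AEStronglyMeasurable (fun ω => X ω - m) μ :=
    hint.aestronglyMeasurable.sub aestronglyMeasurable_const
  have hgmeas : ∀ t : ℝ, AEStronglyMeasurable (fun ω => Real.exp (|X ω - m| ^ α / t ^ α)) μ :=
    fun t => (Real.continuous_exp.comp
      (((Real.continuous_rpow_const hα.le).comp continuous_abs).div_const (t ^ α))
      ).comp_aestronglyMeasurable hYm
  have hfmeas : ∀ t : ℝ, AEStronglyMeasurable (fun ω => Real.exp (|X ω| ^ α / t ^ α)) μ :=
    fun t => (Real.continuous_exp.comp
      (((Real.continuous_rpow_const hα.le).comp continuous_abs).div_const (t ^ α))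
      ).comp_aestronglyMeasurable hint.aestronglyMeasurable
  -- main claim: for each c in S, K * c dominates sInf T
  have hmem : ∀ c ∈ S, sInf T ≤ K * c := by
    rintro c ⟨hc0, hcint⟩
    have hcα : (0:ℝ) < c ^ α := Real.rpow_pos_of_pos hc0 _
    by_cases hI : Integrable (fun ω => Real.exp (|X ω| ^ α / c ^ α)) μ
    · -- integrable case : K * c ∈ T
      have hmean : |m| ≤ C1 * c := by
        set β : ℝ := (α * Real.exp 1)⁻¹ ^ ((1:ℝ)/α) with hβdef
        have hβ : 0 < β := Real.rpow_pos_of_pos (by positivity) _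
        have hfabs : ∀ ω, |X ω| ≤ (β * c) * Real.exp (|X ω| ^ α / c ^ α) := by
          intro ω
          have h := le_beta_exp hα (show (0:ℝ) ≤ |X ω| / c by positivity)
          rw [Real.div_rpow (abs_nonneg _) hc0.le] at h
          calc |X ω| = c * (|X ω| / c) := by field_simp
            _ ≤ c * (β * Real.exp (|X ω| ^ α / c ^ α)) :=
                mul_le_mul_of_nonneg_left h hc0.le
            _ = (β * c) * Real.exp (|X ω| ^ α / c ^ α) := by ring
        calc |m| ≤ ∫ ω, |X ω| ∂μ := by
              rw [hm]
              calc |∫ ω', X ω' ∂μ| ≤ ∫ ω', ‖X ω'‖ ∂μ := by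
                    rw [← Real.norm_eq_abs]; exact norm_integral_le_integral_norm X
                _ = ∫ ω, |X ω| ∂μ := by simp [Real.norm_eq_abs]
          _ ≤ ∫ ω, (β * c) * Real.exp (|X ω| ^ α / c ^ α) ∂μ :=
              integral_mono hint.abs (hI.const_mul _) hfabs
          _ = (β * c) * ∫ ω, Real.exp (|X ω| ^ α / c ^ α) ∂μ := integral_const_mul _ _
          _ ≤ (β * c) * 2 := mul_le_mul_of_nonneg_left hcint (by positivity)
          _ = (2 * β) * c := by ring
          _ ≤ C1 * c := mul_le_mul_of_nonneg_right (two_beta_le_C1 hα) hc0.le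
      set b : ℝ := C1 * L * c with hb
      have hb0 : 0 < b := by rw [hb]; positivity
      have hbα : (0:ℝ) < b ^ α := Real.rpow_pos_of_pos hb0 _
      have hbexp : Real.exp (|m| ^ α / b ^ α) ≤ 2 := by
        have h1 : |m| ^ α ≤ (C1 * c) ^ α :=
          Real.rpow_le_rpow (abs_nonneg _) hmean hα.le
        have hLα : L ^ α = (Real.log 2)⁻¹ := by
          rw [hL, ← Real.rpow_mul hlog2.le,
            show (-(1:ℝ)/α) * α = -1 by field_simp, Real.rpow_neg_one]
        have hbαeq : b ^ α = (C1 * c) ^ α * (Real.log 2)⁻¹ := by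
          rw [hb, show C1 * L * c = (C1 * c) * L by ring,
            Real.mul_rpow (by positivity) hLpos.le, hLα]
        have hdiv : |m| ^ α / b ^ α ≤ Real.log 2 := by
          rw [div_le_iff₀ hbα, hbαeq]
          calc |m| ^ α ≤ (C1 * c) ^ α := h1
            _ = Real.log 2 * ((C1 * c) ^ α * (Real.log 2)⁻¹) := by
                field_simp
        calc Real.exp (|m| ^ α / b ^ α) ≤ Real.exp (Real.log 2) := Real.exp_le_exp.2 hdiv
          _ = 2 := Real.exp_log two_pos
      have hs0 : (0:ℝ) < c + b := by positivity
      have hsα : (0:ℝ) < (c + b) ^ α := Real.rpow_pos_of_pos hs0 _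
      have hcs : c ^ α ≤ (c + b) ^ α := Real.rpow_le_rpow hc0.le (by linarith) hα.le
      have hbs : b ^ α ≤ (c + b) ^ α := Real.rpow_le_rpow hb0.le (by linarith) hα.le
      have hKc : K * c ∈ T := by
        rcases lt_or_ge α 1 with hα1 | hα1
        · -- case α < 1
          have hC2eq : C2 = (2:ℝ) ^ ((1:ℝ)/α) := by rw [hC2, if_pos hα1]
          have hKceq : K * c = (2:ℝ) ^ ((1:ℝ)/α) * (c + b) := by
            rw [hK, hC2eq, hb]; ring
          have htα : (K * c) ^ α = 2 * (c + b) ^ α := by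
            rw [hKceq, Real.mul_rpow (by positivity) hs0.le,
              ← Real.rpow_mul (by norm_num : (0:ℝ) ≤ 2),
              show (1:ℝ)/α * α = 1 by field_simp, Real.rpow_one]
          have hpt : ∀ ω, Real.exp (|X ω - m| ^ α / (K * c) ^ α) ≤
              (1/2) * Real.exp (|X ω| ^ α / c ^ α) + 1 := by
            intro ω
            have hsub : |X ω - m| ^ α ≤ |X ω| ^ α + |m| ^ α := by
              calc |X ω - m| ^ α ≤ (|X ω| + |m|) ^ α :=
                    Real.rpow_le_rpow (abs_nonneg _) (abs_sub _ _) hα.le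
                _ ≤ |X ω| ^ α + |m| ^ α :=
                    rpow_subadd hα.le hα1.le (abs_nonneg _) (abs_nonneg _)
            have hfrac : |X ω - m| ^ α / (K * c) ^ α ≤
                (1/2) * (|X ω| ^ α / c ^ α) + (1 - 1/2) * (|m| ^ α / b ^ α) := by
              rw [htα, show (1/2:ℝ) * (|X ω| ^ α / c ^ α) + (1 - 1/2) * (|m| ^ α / b ^ α)
                  = |X ω| ^ α / (2 * c ^ α) + |m| ^ α / (2 * b ^ α) by ring]
              calc |X ω - m| ^ α / (2 * (c + b) ^ α)
                  ≤ (|X ω| ^ α + |m| ^ α) / (2 * (c + b) ^ α) := by gcongr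
                _ = |X ω| ^ α / (2 * (c + b) ^ α) + |m| ^ α / (2 * (c + b) ^ α) :=
                    add_div _ _ _
                _ ≤ |X ω| ^ α / (2 * c ^ α) + |m| ^ α / (2 * b ^ α) := by
                    gcongr
            calc Real.exp (|X ω - m| ^ α / (K * c) ^ α)
                ≤ Real.exp ((1/2) * (|X ω| ^ α / c ^ α) + (1 - 1/2) * (|m| ^ α / b ^ α)) :=
                  Real.exp_le_exp.2 hfrac
              _ ≤ (1/2) * Real.exp (|X ω| ^ α / c ^ α)
                    + (1 - 1/2) * Real.exp (|m| ^ α / b ^ α) :=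
                  exp_avg_le (by norm_num) (by norm_num)
              _ ≤ (1/2) * Real.exp (|X ω| ^ α / c ^ α) + 1 := by linarith
          refine ⟨mul_pos hKpos hc0, ?_⟩
          have hRint : Integrable
              (fun ω => (1/2) * Real.exp (|X ω| ^ α / c ^ α) + 1) μ :=
            (hI.const_mul _).add (integrable_const _)
          have hLint : Integrable (fun ω => Real.exp (|X ω - m| ^ α / (K*c) ^ α)) μ :=
            hRint.mono' (hgmeas _) (ae_of_all _ fun ω => by
              rw [Real.norm_eq_abs, abs_of_nonneg (Real.exp_pos _).le]; exact hpt ω)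
          calc ∫ ω, Real.exp (|X ω - m| ^ α / (K*c) ^ α) ∂μ
              ≤ ∫ ω, ((1/2) * Real.exp (|X ω| ^ α / c ^ α) + 1) ∂μ :=
                integral_mono hLint hRint hpt
            _ = (1/2) * (∫ ω, Real.exp (|X ω| ^ α / c ^ α) ∂μ) + 1 := by
                rw [integral_add (hI.const_mul _) (integrable_const _),
                  integral_const_mul, integral_const, probReal_univ,
                  smul_eq_mul, one_mul]
            _ ≤ (1/2) * 2 + 1 := by linarith
            _ = 2 := by norm_num
        · -- case 1 ≤ α
          have hC2eq : C2 = 1 := by rw [hC2, if_neg (not_lt.2 hα1)]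
          have hKceq : K * c = c + b := by rw [hK, hC2eq, hb]; ring
          set θ : ℝ := c / (c + b) with hθ
          have hθ0 : 0 ≤ θ := by positivity
          have hθ1 : θ ≤ 1 := by rw [hθ, div_le_one hs0]; linarith
          have hpt : ∀ ω, Real.exp (|X ω - m| ^ α / (K * c) ^ α) ≤
              θ * Real.exp (|X ω| ^ α / c ^ α) + (1 - θ) * 2 := by
            intro ω
            have hx : |X ω - m| / (c + b) ≤ θ * (|X ω| / c) + (1 - θ) * (|m| / b) := by
              rw [show θ * (|X ω| / c) + (1 - θ) * (|m| / b) = (|X ω| + |m|) / (c + b) by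
                rw [hθ]; field_simp; ring]
              gcongr
              exact abs_sub _ _
            calc Real.exp (|X ω - m| ^ α / (K * c) ^ α)
                = Real.exp ((|X ω - m| / (c + b)) ^ α) := by
                  rw [hKceq, Real.div_rpow (abs_nonneg _) hs0.le]
              _ ≤ Real.exp ((θ * (|X ω| / c) + (1 - θ) * (|m| / b)) ^ α) :=
                  Real.exp_le_exp.2 (Real.rpow_le_rpow (by positivity) hx hα.le)
              _ ≤ Real.exp (θ * (|X ω| / c) ^ α + (1 - θ) * (|m| / b) ^ α) :=
                  Real.exp_le_exp.2 (rpow_avg_le hα1 hθ0 hθ1 (by positivity) (by positivity))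
              _ ≤ θ * Real.exp ((|X ω| / c) ^ α) + (1 - θ) * Real.exp ((|m| / b) ^ α) :=
                  exp_avg_le hθ0 hθ1
              _ = θ * Real.exp (|X ω| ^ α / c ^ α) + (1 - θ) * Real.exp (|m| ^ α / b ^ α) := by
                  rw [Real.div_rpow (abs_nonneg _) hc0.le, Real.div_rpow (abs_nonneg _) hb0.le]
              _ ≤ θ * Real.exp (|X ω| ^ α / c ^ α) + (1 - θ) * 2 := by
                  have h1θ : 0 ≤ 1 - θ := by linarith
                  nlinarith [Real.exp_pos (|X ω| ^ α / c ^ α)]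
          refine ⟨mul_pos hKpos hc0, ?_⟩
          have hRint : Integrable
              (fun ω => θ * Real.exp (|X ω| ^ α / c ^ α) + (1 - θ) * 2) μ :=
            (hI.const_mul _).add (integrable_const _)
          have hLint : Integrable (fun ω => Real.exp (|X ω - m| ^ α / (K*c) ^ α)) μ :=
            hRint.mono' (hgmeas _) (ae_of_all _ fun ω => by
              rw [Real.norm_eq_abs, abs_of_nonneg (Real.exp_pos _).le]; exact hpt ω)
          calc ∫ ω, Real.exp (|X ω - m| ^ α / (K*c) ^ α) ∂μ
              ≤ ∫ ω, (θ * Real.exp (|X ω| ^ α / c ^ α) + (1 - θ) * 2) ∂μ :=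
                integral_mono hLint hRint hpt
            _ = θ * (∫ ω, Real.exp (|X ω| ^ α / c ^ α) ∂μ) + (1 - θ) * 2 := by
                rw [integral_add (hI.const_mul _) (integrable_const _),
                  integral_const_mul, integral_const, probReal_univ,
                  smul_eq_mul, one_mul]
            _ ≤ θ * 2 + (1 - θ) * 2 := by nlinarith
            _ = 2 := by ring
      exact csInf_le hTbdd hKc
    · -- non-integrable case : sInf T ≤ 0 ≤ K * c
      have hTsmall : ∀ t, 0 < t → t ≤ c/2 → t ∈ T := by
        intro t ht0 htc
        have htα : (0:ℝ) < t ^ α := Real.rpow_pos_of_pos ht0 _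
        have hc2α : (0:ℝ) < (c/2) ^ α := Real.rpow_pos_of_pos (by positivity) _
        refine ⟨ht0, ?_⟩
        have hgnot : ¬ Integrable (fun ω => Real.exp (|X ω - m| ^ α / t ^ α)) μ := by
          intro hgInt
          apply hI
          have hpt : ∀ ω, Real.exp (|X ω| ^ α / c ^ α) ≤
              Real.exp (|X ω - m| ^ α / t ^ α) * Real.exp ((2:ℝ)^α * |m| ^ α / c ^ α) := by
            intro ω
            rw [← Real.exp_add]
            apply Real.exp_le_exp.2
            have habs : |X ω| ≤ 2 * max |X ω - m| |m| := by
              have h0 : |X ω| ≤ |X ω - m| + |m| := by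
                calc |X ω| = |(X ω - m) + m| := by ring_nf
                  _ ≤ |X ω - m| + |m| := abs_add_le _ _
              rcases le_total |X ω - m| |m| with h | h
              · rw [max_eq_right h]; linarith
              · rw [max_eq_left h]; linarith
            have hmax : (max |X ω - m| |m|) ^ α ≤ |X ω - m| ^ α + |m| ^ α := by
              rcases le_total |X ω - m| |m| with h | h
              · rw [max_eq_right h]
                have := Real.rpow_nonneg (abs_nonneg (X ω - m)) α
                linarith
              · rw [max_eq_left h]
                have := Real.rpow_nonneg (abs_nonneg m) α
                linarith
            have h2 : |X ω| ^ α ≤ (2:ℝ)^α * (|X ω - m| ^ α + |m| ^ α) := by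
              calc |X ω| ^ α ≤ (2 * max |X ω - m| |m|) ^ α :=
                    Real.rpow_le_rpow (abs_nonneg _) habs hα.le
                _ = (2:ℝ)^α * (max |X ω - m| |m|) ^ α :=
                    Real.mul_rpow (by norm_num) (le_max_of_le_right (abs_nonneg m))
                _ ≤ (2:ℝ)^α * (|X ω - m| ^ α + |m| ^ α) :=
                    mul_le_mul_of_nonneg_left hmax (Real.rpow_nonneg (by norm_num) α)
            have hc2 : (2:ℝ)^α * |X ω - m| ^ α / c ^ α = |X ω - m| ^ α / (c/2) ^ α := by
              rw [Real.div_rpow hc0.le (by norm_num : (0:ℝ) ≤ 2)]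
              field_simp
            have hmono : |X ω - m| ^ α / (c/2) ^ α ≤ |X ω - m| ^ α / t ^ α :=
              div_le_div_of_nonneg_left (Real.rpow_nonneg (abs_nonneg _) α) htα
                (Real.rpow_le_rpow ht0.le htc hα.le)
            calc |X ω| ^ α / c ^ α ≤ ((2:ℝ)^α * (|X ω - m| ^ α + |m| ^ α)) / c ^ α := by
                  gcongr
              _ = (2:ℝ)^α * |X ω - m| ^ α / c ^ α + (2:ℝ)^α * |m| ^ α / c ^ α := by ring
              _ = |X ω - m| ^ α / (c/2) ^ α + (2:ℝ)^α * |m| ^ α / c ^ α := by rw [hc2]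
              _ ≤ |X ω - m| ^ α / t ^ α + (2:ℝ)^α * |m| ^ α / c ^ α := by linarith
          exact (hgInt.mul_const _).mono' (hfmeas c) (ae_of_all _ fun ω => by
            rw [Real.norm_eq_abs, abs_of_nonneg (Real.exp_pos _).le]; exact hpt ω)
        rw [integral_undef hgnot]
        norm_num
      have h0 : sInf T ≤ 0 := by
        refine le_of_forall_pos_le_add ?_
        intro ε hε
        have h1 := csInf_le hTbdd
          (hTsmall (min ε (c/2)) (lt_min hε (by positivity)) (min_le_right _ _))
        have h2 := min_le_left ε (c/2)
        linarith
      exact h0.trans (mul_pos hKpos hc0).le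
  -- conclude
  refine le_of_forall_pos_le_add ?_
  intro ε hε
  obtain ⟨c, hcS, hclt⟩ := Real.lt_sInf_add_pos hX (show 0 < ε / K by positivity)
  calc sInf T ≤ K * c := hmem c hcS
    _ ≤ K * (sInf S + ε / K) := mul_le_mul_of_nonneg_left hclt.le hKpos.le
    _ = K * sInf S + ε := by field_simp
end

section
/- For ε ≥ 2, the series e · exp(−ε) · ∑_{k≥1} 2^{2^{k+1}} exp(−2^k ε) is at most 2 exp(−ε); equivalently, e ∑_{k≥1} 2^{2^{k+1}} exp(−2^{k+1} ε) ≤ 2 exp(−ε). -/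
open Real

private lemma chain_r_lt_one : 2 * Real.exp (-1) < 1 := by
  have h1 : Real.exp (-1) * Real.exp 1 = 1 := by rw [← Real.exp_add]; norm_num
  nlinarith [Real.exp_one_gt_d9, Real.exp_pos (-1)]

private lemma chain_nat_le (k : ℕ) : 4 * (k + 1) ≤ 2 ^ (k + 2) := by
  have h : k < 2 ^ k := Nat.lt_two_pow_self
  have h2 : 2 ^ (k + 2) = 4 * 2 ^ k := by ring
  omega

private lemma chain_term_le (k : ℕ) :
    (2 * Real.exp (-1)) ^ (2 ^ (k + 2)) ≤
      (2 * Real.exp (-1)) ^ 4 * ((2 * Real.exp (-1)) ^ 4) ^ k := by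
  have hr0 : (0:ℝ) ≤ 2 * Real.exp (-1) := by positivity
  have : (2 * Real.exp (-1)) ^ 4 * ((2 * Real.exp (-1)) ^ 4) ^ k
      = (2 * Real.exp (-1)) ^ (4 * (k + 1)) := by
    rw [← pow_mul, ← pow_add]; ring_nf
  rw [this]
  exact pow_le_pow_of_le_one hr0 chain_r_lt_one.le (chain_nat_le k)

private lemma chain_summable_key :
    Summable (fun k : ℕ => (2 * Real.exp (-1)) ^ (2 ^ (k + 2))) := by
  have hr0 : (0:ℝ) ≤ 2 * Real.exp (-1) := by positivity
  have h4 : (2 * Real.exp (-1)) ^ 4 < 1 := pow_lt_one₀ hr0 chain_r_lt_one (by norm_num)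
  exact Summable.of_nonneg_of_le (fun k => by positivity) chain_term_le
    ((summable_geometric_of_lt_one (by positivity) h4).mul_left _)

private lemma chain_cubic : (2 * Real.exp (-1)) ^ 3 + (2 * Real.exp (-1)) ^ 4 ≤ 1 := by
  have h1 : Real.exp (-1) * Real.exp 1 = 1 := by rw [← Real.exp_add]; norm_num
  have hE : (2.7182818283:ℝ) < Real.exp 1 := Real.exp_one_gt_d9
  have hx0 : (0:ℝ) < Real.exp (-1) := Real.exp_pos _
  have hx : Real.exp (-1) ≤ 0.37 := by nlinarith
  nlinarith [pow_le_pow_left₀ hx0.le hx 3, pow_le_pow_left₀ hx0.le hx 4,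
    pow_nonneg hx0.le 3, pow_nonneg hx0.le 4]

private lemma chain_tsum_key :
    (∑' k : ℕ, (2 * Real.exp (-1)) ^ (2 ^ (k + 2))) ≤ 2 * Real.exp (-1) := by
  have hr0 : (0:ℝ) ≤ 2 * Real.exp (-1) := by positivity
  have h4 : (2 * Real.exp (-1)) ^ 4 < 1 := pow_lt_one₀ hr0 chain_r_lt_one (by norm_num)
  have hsumgeo : Summable (fun k : ℕ => (2 * Real.exp (-1)) ^ 4 * ((2 * Real.exp (-1)) ^ 4) ^ k) :=
    (summable_geometric_of_lt_one (by positivity) h4).mul_left _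
  have h := chain_summable_key.tsum_le_tsum chain_term_le hsumgeo
  rw [tsum_mul_left, tsum_geometric_of_lt_one (by positivity) h4] at h
  refine h.trans ?_
  have hpos : (0:ℝ) < 1 - (2 * Real.exp (-1)) ^ 4 := by linarith
  rw [← div_eq_mul_inv, div_le_iff₀ hpos]
  nlinarith [chain_cubic, hr0, chain_r_lt_one]

/-- analytic series inequality used in the generic chaining proof. -/
theorem chaining_series_bound :
    ∀ ε : ℝ, 2 ≤ ε →
      (Real.exp 1 * Real.exp (-ε) *
          ∑' k : ℕ, (2 : ℝ) ^ (2 ^ (k + 2)) * Real.exp (-((2 : ℝ) ^ (k + 1) * ε)) ≤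
        2 * Real.exp (-ε)) ∧
      (Real.exp 1 *
          ∑' k : ℕ, (2 : ℝ) ^ (2 ^ (k + 2)) * Real.exp (-((2 : ℝ) ^ (k + 2) * ε)) ≤
        2 * Real.exp (-ε)) := by
  intro ε hε
  have he : Real.exp 1 * Real.exp (-1) = 1 := by rw [← Real.exp_add]; norm_num
  -- part 1 termwise bound
  have hterm1 : ∀ k : ℕ, (2 : ℝ) ^ (2 ^ (k + 2)) * Real.exp (-((2 : ℝ) ^ (k + 1) * ε)) ≤
      (2 * Real.exp (-1)) ^ (2 ^ (k + 2)) := by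
    intro k
    rw [mul_pow]
    refine mul_le_mul_of_nonneg_left ?_ (by positivity)
    rw [← Real.exp_nat_mul]
    apply Real.exp_le_exp.2
    push_cast
    have h2 : (0:ℝ) < 2 ^ (k + 1) := by positivity
    have h3 : (2:ℝ) ^ (k + 2) = 2 ^ (k + 1) * 2 := by ring
    nlinarith [mul_le_mul_of_nonneg_left hε h2.le]
  have hsum1 : Summable (fun k : ℕ => (2 : ℝ) ^ (2 ^ (k + 2)) * Real.exp (-((2 : ℝ) ^ (k + 1) * ε))) :=
    Summable.of_nonneg_of_le (fun k => by positivity) hterm1 chain_summable_key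
  have h1 := (hsum1.tsum_le_tsum hterm1 chain_summable_key).trans chain_tsum_key
  -- part 2 termwise bound
  have hterm2 : ∀ k : ℕ, (2 : ℝ) ^ (2 ^ (k + 2)) * Real.exp (-((2 : ℝ) ^ (k + 2) * ε)) ≤
      Real.exp (-ε) * (2 * Real.exp (-1)) ^ (2 ^ (k + 2)) := by
    intro k
    rw [mul_pow]
    have key : Real.exp (-((2 : ℝ) ^ (k + 2) * ε)) ≤ Real.exp (-ε) * Real.exp (-1) ^ (2 ^ (k + 2)) := by
      rw [← Real.exp_nat_mul, ← Real.exp_add]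
      apply Real.exp_le_exp.2
      push_cast
      have h4 : (4:ℝ) ≤ 2 ^ (k + 2) := by
        calc (4:ℝ) = 2 ^ 2 := by norm_num
        _ ≤ 2 ^ (k + 2) := by
          apply pow_le_pow_right₀ one_le_two
          omega
      nlinarith [mul_nonneg (by linarith : (0:ℝ) ≤ (2:ℝ) ^ (k + 2) - 4) (by linarith : (0:ℝ) ≤ ε - 2)]
    calc (2 : ℝ) ^ (2 ^ (k + 2)) * Real.exp (-((2 : ℝ) ^ (k + 2) * ε))
        ≤ (2 : ℝ) ^ (2 ^ (k + 2)) * (Real.exp (-ε) * Real.exp (-1) ^ (2 ^ (k + 2))) := by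
          exact mul_le_mul_of_nonneg_left key (by positivity)
      _ = Real.exp (-ε) * ((2:ℝ) ^ (2 ^ (k + 2)) * Real.exp (-1) ^ (2 ^ (k + 2))) := by ring
  have hsum2 : Summable (fun k : ℕ => (2 : ℝ) ^ (2 ^ (k + 2)) * Real.exp (-((2 : ℝ) ^ (k + 2) * ε))) :=
    Summable.of_nonneg_of_le (fun k => by positivity) hterm2 (chain_summable_key.mul_left _)
  have h2 := hsum2.tsum_le_tsum hterm2 (chain_summable_key.mul_left _)
  rw [tsum_mul_left] at h2
  have h2' : (∑' k : ℕ, (2 : ℝ) ^ (2 ^ (k + 2)) * Real.exp (-((2 : ℝ) ^ (k + 2) * ε))) ≤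
      Real.exp (-ε) * (2 * Real.exp (-1)) := by
    refine h2.trans ?_
    exact mul_le_mul_of_nonneg_left chain_tsum_key (Real.exp_pos _).le
  constructor
  · calc Real.exp 1 * Real.exp (-ε) *
        ∑' k : ℕ, (2 : ℝ) ^ (2 ^ (k + 2)) * Real.exp (-((2 : ℝ) ^ (k + 1) * ε))
        ≤ Real.exp 1 * Real.exp (-ε) * (2 * Real.exp (-1)) := by
          exact mul_le_mul_of_nonneg_left h1 (by positivity)
      _ = 2 * Real.exp (-ε) := by linear_combination 2 * Real.exp (-ε) * he
  · calc Real.exp 1 *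
        ∑' k : ℕ, (2 : ℝ) ^ (2 ^ (k + 2)) * Real.exp (-((2 : ℝ) ^ (k + 2) * ε))
        ≤ Real.exp 1 * (Real.exp (-ε) * (2 * Real.exp (-1))) := by
          exact mul_le_mul_of_nonneg_left h2' (Real.exp_pos _).le
      _ = 2 * Real.exp (-ε) := by linear_combination 2 * Real.exp (-ε) * he
end
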